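/- arXiv:1411.6931 — 12 statements merged into one kernel-verified Lean document; each statement's English description precedes it below -/
import Mathlib

section
/- Let (L,E,R,∂₂,∂₁,{,}) be a 2-crossed module of commutative algebras. Then the map e▶'l := {e⊗∂₂(l)} defines an action of E on L, and with this action (L,E,∂₂) is a crossed module: ∂₂(e▶'l) = e·∂₂(l) and ∂₂(l)▶'l' = ll' for all e ∈ E and l,l' ∈ L. -/
/-- An action of a commutative `k`-algebra `R` on a commutative `k`-algebra `M`:
a `k`-bilinear map satisfying `r▶(mm') = (r▶m)m' = m(r▶m')` and `(rr')▶m = r▶(r'▶m)`. -/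
structure AlgAction (k R M : Type*) [CommRing k] [CommRing R] [CommRing M]
    [Algebra k R] [Algebra k M] where
  act : R →ₗ[k] M →ₗ[k] M
  a1 : ∀ (r : R) (m m' : M), act r (m * m') = act r m * m'
  a1' : ∀ (r : R) (m m' : M), act r (m * m') = m * act r m'
  a2 : ∀ (r r' : R) (m : M), act (r * r') m = act r (act r' m)

/-- A 2-crossed module of commutative `k`-algebras, with Peiffer lifting `lift e e' = {e ⊗ e'}`.
The action `e ▶' l` of `E` on `L` is `lift e (d2 l)` (axiom 2XM5 is definitional). -/
structure TwoCrossedModule (k L E R : Type*) [CommRing k] [CommRing L] [CommRing E] [CommRing R]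
    [Algebra k L] [Algebra k E] [Algebra k R] where
  actE : AlgAction k R E
  actL : AlgAction k R L
  d2 : L →ₗ[k] E
  d1 : E →ₗ[k] R
  d2_mul : ∀ l l' : L, d2 (l * l') = d2 l * d2 l'
  d1_mul : ∀ e e' : E, d1 (e * e') = d1 e * d1 e'
  comp : ∀ l : L, d1 (d2 l) = 0
  d1_act : ∀ (r : R) (e : E), d1 (actE.act r e) = r * d1 e
  d2_act : ∀ (r : R) (l : L), d2 (actL.act r l) = actE.act r (d2 l)
  lift : E →ₗ[k] E →ₗ[k] L
  axm1 : ∀ e e' : E, d2 (lift e e') = e * e' - actE.act (d1 e') e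
  axm2 : ∀ l l' : L, lift (d2 l) (d2 l') = l * l'
  axm3 : ∀ e e' e'' : E, lift e (e' * e'') = lift (e * e') e'' + actL.act (d1 e'') (lift e e')
  axm4 : ∀ (l : L) (e : E), lift (d2 l) e = lift e (d2 l) - actL.act (d1 e) l
  axm6a : ∀ (r : R) (e e' : E), actL.act r (lift e e') = lift (actE.act r e) e'
  axm6b : ∀ (r : R) (e e' : E), actL.act r (lift e e') = lift e (actE.act r e')

/-- `e ▶' l = {e ⊗ ∂₂ l}` is an action of `E` on `L`, and
`(L, E, ∂₂)` with this action is a crossed module. -/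
theorem stmt3 (k L E R : Type*) [CommRing k] [CommRing L] [CommRing E] [CommRing R]
    [Algebra k L] [Algebra k E] [Algebra k R] (T : TwoCrossedModule k L E R) :
    ∀ act' : E → L → L,
      (act' = fun e l => T.lift e (T.d2 l)) →
      (∀ (e e' : E) (l : L), act' (e + e') l = act' e l + act' e' l) ∧
      (∀ (e : E) (l l' : L), act' e (l + l') = act' e l + act' e l') ∧
      (∀ (c : k) (e : E) (l : L), act' (c • e) l = c • act' e l) ∧
      (∀ (c : k) (e : E) (l : L), act' e (c • l) = c • act' e l) ∧
      (∀ (e : E) (l l' : L), act' e (l * l') = act' e l * l') ∧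
      (∀ (e : E) (l l' : L), act' e (l * l') = l * act' e l') ∧
      (∀ (e e' : E) (l : L), act' (e * e') l = act' e (act' e' l)) ∧
      -- XM1
      (∀ (e : E) (l : L), T.d2 (act' e l) = e * T.d2 l) ∧
      -- XM2
      (∀ l l' : L, act' (T.d2 l) l' = l * l') := by
  intro act' h
  subst h
  -- key fact: d2 (lift e (d2 l)) = e * d2 l  (XM1)
  have hE0 : ∀ e : E, T.actE.act (0 : R) e = 0 := by
    intro e; rw [map_zero]; rfl
  have hL0 : ∀ l : L, T.actL.act (0 : R) l = 0 := by
    intro l; rw [map_zero]; rfl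
  have xm1 : ∀ (e : E) (l : L), T.d2 (T.lift e (T.d2 l)) = e * T.d2 l := by
    intro e l
    rw [T.axm1, T.comp, hE0, sub_zero]
  -- lift (e * d2 l) (d2 l') = lift e (d2 l) * l'
  have key : ∀ (e : E) (l l' : L),
      T.lift (e * T.d2 l) (T.d2 l') = T.lift e (T.d2 l) * l' := by
    intro e l l'
    rw [← T.axm2 (T.lift e (T.d2 l)) l', xm1]
  have mul3 : ∀ (e e' : E) (l : L),
      T.lift e (e' * T.d2 l) = T.lift (e * e') (T.d2 l) := by
    intro e e' l
    rw [T.axm3, T.comp, hL0, add_zero]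
  refine ⟨?_, ?_, ?_, ?_, ?_, ?_, ?_, ?_, ?_⟩
  · intro e e' l; simp [map_add]
  · intro e l l'; simp [map_add]
  · intro c e l; simp [map_smul]
  · intro c e l; simp [map_smul]
  · intro e l l'
    simp only [T.d2_mul]
    rw [mul3, key]
  · intro e l l'
    simp only [T.d2_mul]
    rw [mul_comm (T.d2 l), mul3, key, mul_comm]
  · intro e e' l
    simp only
    rw [xm1, mul3]
  · exact xm1
  · intro l l'; exact T.axm2 l l'
end

section
/- Let (L,E,R,∂₂,∂₁,{,}) be a 2-crossed module of commutative algebras. Then the formula (r,e)▶•(e',l) = (ee' + r▶e', ∂₁(e)▶l + r▶l − {e'⊗e}) defines an algebra action of the semidirect product R⋉E on the semidirect product E⋉L (where E acts on L via e▶'l = {e⊗∂₂(l)}). -/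
/-- `(r,e) ▶• (e',l) = (ee' + r▶e', ∂₁(e)▶l + r▶l - {e'⊗e})` is an
algebra action of `R ⋉ E` on `E ⋉ L`. -/
theorem stmt4 (k L E R : Type*) [CommRing k] [CommRing L] [CommRing E] [CommRing R]
    [Algebra k L] [Algebra k E] [Algebra k R] (T : TwoCrossedModule k L E R) :
    ∀ (m1 : R × E → R × E → R × E) (m2 : E × L → E × L → E × L)
      (bact : R × E → E × L → E × L),
      (m1 = fun p q => (p.1 * q.1, T.actE.act p.1 q.2 + T.actE.act q.1 p.2 + p.2 * q.2)) →
      (m2 = fun p q => (p.1 * q.1,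
        T.lift p.1 (T.d2 q.2) + T.lift q.1 (T.d2 p.2) + p.2 * q.2)) →
      (bact = fun p q => (p.2 * q.1 + T.actE.act p.1 q.1,
        T.actL.act (T.d1 p.2) q.2 + T.actL.act p.1 q.2 - T.lift q.1 p.2)) →
      (∀ p p' q, bact (p + p') q = bact p q + bact p' q) ∧
      (∀ p q q', bact p (q + q') = bact p q + bact p q') ∧
      (∀ (c : k) p q, bact (c • p) q = c • bact p q) ∧
      (∀ (c : k) p q, bact p (c • q) = c • bact p q) ∧
      (∀ p q q', bact p (m2 q q') = m2 (bact p q) q') ∧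
      (∀ p p' q, bact (m1 p p') q = bact p (bact p' q)) := by
  rintro m1 m2 bact rfl rfl rfl
  refine ⟨?_, ?_, ?_, ?_, ?_, ?_⟩
  · rintro ⟨r, e⟩ ⟨r', e'⟩ ⟨e'', l⟩
    simp only [Prod.mk_add_mk, Prod.mk.injEq, map_add, LinearMap.add_apply]
    constructor <;> ring
  · rintro ⟨r, e⟩ ⟨e', l⟩ ⟨e'', l'⟩
    simp only [Prod.mk_add_mk, Prod.mk.injEq, map_add, LinearMap.add_apply]
    constructor <;> ring
  · rintro c ⟨r, e⟩ ⟨e', l⟩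
    simp only [Prod.smul_mk, Prod.mk.injEq, map_smul, LinearMap.smul_apply, smul_mul_assoc]
    constructor <;> module
  · rintro c ⟨r, e⟩ ⟨e', l⟩
    simp only [Prod.smul_mk, Prod.mk.injEq, map_smul, LinearMap.smul_apply, mul_smul_comm,
      smul_sub]
    constructor <;> module
  · rintro ⟨r, e⟩ ⟨e', l⟩ ⟨e'', l'⟩
    simp only [Prod.mk.injEq, map_add, map_sub, LinearMap.add_apply, LinearMap.sub_apply]
    constructor
    · linear_combination T.actE.a1 r e' e''
    · have k1 : T.actL.act (T.d1 e) (T.lift e' (T.d2 l'))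
          = T.lift e' (T.actE.act (T.d1 e) (T.d2 l')) := T.axm6b _ _ _
      have k2 : T.actL.act (T.d1 e) (T.lift e'' (T.d2 l))
          = T.lift e'' (T.d2 (T.actL.act (T.d1 e) l)) := by rw [T.axm6b, T.d2_act]
      have k3 : T.actL.act (T.d1 e) (l * l') = T.actL.act (T.d1 e) l * l' := T.actL.a1 _ _ _
      have k4 : T.actL.act r (T.lift e' (T.d2 l'))
          = T.lift (T.actE.act r e') (T.d2 l') := T.axm6a _ _ _
      have k5 : T.actL.act r (T.lift e'' (T.d2 l))
          = T.lift e'' (T.d2 (T.actL.act r l)) := by rw [T.axm6b, T.d2_act]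
      have k6 : T.actL.act r (l * l') = T.actL.act r l * l' := T.actL.a1 _ _ _
      have k7 : T.lift e'' (T.d2 (T.lift e' e)) = T.lift (e' * e'') e := by
        rw [T.axm1, map_sub, T.axm3, ← T.axm6b, mul_comm e'' e']
        ring
      have k8 : T.lift e' e * l'
          = T.lift (e' * e) (T.d2 l') - T.lift e' (T.actE.act (T.d1 e) (T.d2 l')) := by
        have h := T.axm2 (T.lift e' e) l'
        rw [T.axm1, map_sub, LinearMap.sub_apply, ← T.axm6a, T.axm6b] at h
        exact h.symm
      have k9 : T.lift (e' * e) (T.d2 l') = T.lift (e * e') (T.d2 l') := by rw [mul_comm]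
      linear_combination k1 + k2 + k3 + k4 + k5 + k6 + k7 + k8 + k9
  · rintro ⟨r, e⟩ ⟨r', e'⟩ ⟨e'', l⟩
    simp only [Prod.mk.injEq, map_add, map_sub, LinearMap.add_apply, LinearMap.sub_apply]
    constructor
    · linear_combination T.actE.a2 r r' e'' - T.actE.a1 r e' e'' - T.actE.a1 r' e e''
        + T.actE.a1' r' e e''
    · have m1 : T.actL.act (T.d1 (T.actE.act r e')) l
          = T.actL.act r (T.actL.act (T.d1 e') l) := by rw [T.d1_act, T.actL.a2]
      have m2 : T.actL.act (T.d1 (T.actE.act r' e)) l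
          = T.actL.act (T.d1 e) (T.actL.act r' l) := by rw [T.d1_act, mul_comm, T.actL.a2]
      have m3 : T.actL.act (T.d1 (e * e')) l
          = T.actL.act (T.d1 e) (T.actL.act (T.d1 e') l) := by rw [T.d1_mul, T.actL.a2]
      have m4 : T.actL.act (r * r') l = T.actL.act r (T.actL.act r' l) := T.actL.a2 _ _ _
      have m5 : T.lift e'' (T.actE.act r e')
          = T.actL.act r (T.lift e'' e') := (T.axm6b _ _ _).symm
      have m6 : T.lift e'' (T.actE.act r' e) = T.lift (T.actE.act r' e'') e := by
        rw [← T.axm6b, T.axm6a]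
      have m7 : T.lift e'' (e * e')
          = T.lift (e' * e'') e + T.actL.act (T.d1 e) (T.lift e'' e') := by
        rw [mul_comm e e', T.axm3, mul_comm e'' e']
      linear_combination m1 + m2 + m3 + m4 - m5 - m6 - m7
end

section
/- Let (L,E,R,∂₂,∂₁,{,}) be a 2-crossed module of commutative algebras. In L, for all e,f,g ∈ E: g▶'{f⊗e} = {fg⊗e}, where ▶' denotes the action e▶'l = {e⊗∂₂(l)} of E on L. -/
/-- `g ▶' {f ⊗ e} = {fg ⊗ e}`. -/
theorem stmt5 (k L E R : Type*) [CommRing k] [CommRing L] [CommRing E] [CommRing R]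
    [Algebra k L] [Algebra k E] [Algebra k R] (T : TwoCrossedModule k L E R) (e f g : E) :
    T.lift g (T.d2 (T.lift f e)) = T.lift (f * g) e := by
  rw [T.axm1, map_sub, T.axm3, ← T.axm6b, mul_comm g f]
  ring
end

section
/- Let (L,E,R,∂₂,∂₁,{,}) be a 2-crossed module of commutative algebras. For all e,f ∈ E and k ∈ L: ∂₁(e)▶(f▶'k) = (fe)▶'k − {f⊗e}·k, where ▶' is the action e▶'l = {e⊗∂₂(l)} of E on L. -/
/-- `∂₁(e) ▶ (f ▶' k) = (fe) ▶' k - {f ⊗ e}·k`. -/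
theorem stmt6 (k L E R : Type*) [CommRing k] [CommRing L] [CommRing E] [CommRing R]
    [Algebra k L] [Algebra k E] [Algebra k R] (T : TwoCrossedModule k L E R) (e f : E) (l : L) :
    T.actL.act (T.d1 e) (T.lift f (T.d2 l)) = T.lift (f * e) (T.d2 l) - T.lift f e * l := by
  have h : T.lift f e * l =
      T.lift (f * e) (T.d2 l) - T.actL.act (T.d1 e) (T.lift f (T.d2 l)) := by
    rw [← T.axm2, T.axm1, map_sub, LinearMap.sub_apply, T.axm6a]
  rw [h]; abel
end

section
/- Let (L,E,R,∂₂,∂₁,{,}) be a 2-crossed module of commutative algebras. Define the algebra of 2-simplices A₂ = (R⋉E)⋉_{▶•}(E⋉L) and the three maps d₀(r,e,e',l) = (r,e), d₁(r,e,e',l) = (r, e+e'), d₂(r,e,e',l) = (r+∂₁(e), e'+∂₂(l)) into A₁ = R⋉E. Then d₀, d₁, d₂ are algebra homomorphisms. -/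
/-- the face maps `d₀, d₁, d₂ : A₂ → A₁` are algebra homomorphisms. -/
theorem stmt7 (k L E R : Type*) [CommRing k] [CommRing L] [CommRing E] [CommRing R]
    [Algebra k L] [Algebra k E] [Algebra k R] (T : TwoCrossedModule k L E R) :
    ∀ (m1 : R × E → R × E → R × E)
      (mul2 : (R × E) × (E × L) → (R × E) × (E × L) → (R × E) × (E × L))
      (d0 d1 d2 : (R × E) × (E × L) → R × E),
      (m1 = fun p q => (p.1 * q.1, T.actE.act p.1 q.2 + T.actE.act q.1 p.2 + p.2 * q.2)) →
      (mul2 = fun p q => (m1 p.1 q.1,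
        (p.1.2 * q.2.1 + T.actE.act p.1.1 q.2.1,
          T.actL.act (T.d1 p.1.2) q.2.2 + T.actL.act p.1.1 q.2.2 - T.lift q.2.1 p.1.2)
        + (q.1.2 * p.2.1 + T.actE.act q.1.1 p.2.1,
          T.actL.act (T.d1 q.1.2) p.2.2 + T.actL.act q.1.1 p.2.2 - T.lift p.2.1 q.1.2)
        + (p.2.1 * q.2.1,
          T.lift p.2.1 (T.d2 q.2.2) + T.lift q.2.1 (T.d2 p.2.2) + p.2.2 * q.2.2))) →
      (d0 = fun p => p.1) →
      (d1 = fun p => (p.1.1, p.1.2 + p.2.1)) →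
      (d2 = fun p => (p.1.1 + T.d1 p.1.2, p.2.1 + T.d2 p.2.2)) →
      ((∀ p q, d0 (p + q) = d0 p + d0 q) ∧ (∀ (c : k) p, d0 (c • p) = c • d0 p) ∧
        (∀ p q, d0 (mul2 p q) = m1 (d0 p) (d0 q))) ∧
      ((∀ p q, d1 (p + q) = d1 p + d1 q) ∧ (∀ (c : k) p, d1 (c • p) = c • d1 p) ∧
        (∀ p q, d1 (mul2 p q) = m1 (d1 p) (d1 q))) ∧
      ((∀ p q, d2 (p + q) = d2 p + d2 q) ∧ (∀ (c : k) p, d2 (c • p) = c • d2 p) ∧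
        (∀ p q, d2 (mul2 p q) = m1 (d2 p) (d2 q))) := by
  rintro m1 mul2 d0 d1 d2 rfl rfl rfl rfl rfl
  refine ⟨⟨fun p q => rfl, fun c p => rfl, fun p q => rfl⟩,
    ⟨?_, ?_, ?_⟩, ⟨?_, ?_, ?_⟩⟩
  · rintro ⟨⟨r,e⟩,f,l⟩ ⟨⟨r',e'⟩,f',l'⟩
    simp [Prod.ext_iff]; ring
  · rintro c ⟨⟨r,e⟩,f,l⟩
    simp [Prod.ext_iff, smul_add]
  · rintro ⟨⟨r,e⟩,f,l⟩ ⟨⟨r',e'⟩,f',l'⟩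
    simp only [Prod.ext_iff, Prod.fst_add, Prod.snd_add, map_add, LinearMap.add_apply]
    exact ⟨trivial, by ring⟩
  · rintro ⟨⟨r,e⟩,f,l⟩ ⟨⟨r',e'⟩,f',l'⟩
    simp [Prod.ext_iff]; constructor <;> ring
  · rintro c ⟨⟨r,e⟩,f,l⟩
    simp [Prod.ext_iff, smul_add]
  · rintro ⟨⟨r,e⟩,f,l⟩ ⟨⟨r',e'⟩,f',l'⟩
    simp only [Prod.ext_iff, Prod.fst_add, Prod.snd_add, map_add, map_sub,
      LinearMap.add_apply, LinearMap.sub_apply, T.d1_mul, T.d2_mul, T.d1_act,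
      T.d2_act, T.axm1, T.axm2, T.comp, map_zero, LinearMap.zero_apply]
    constructor <;> ring
end

section
/- Let (L,E,R,∂₂,∂₁,{,}) be a 2-crossed module of commutative algebras. The maps s₀(r,e) = (r,e,0,0) and s₁(r,e) = (r,0,e,0) from A₁ = R⋉E to A₂ = (R⋉E)⋉_{▶•}(E⋉L) are algebra homomorphisms, and satisfy the simplicial identities d₀∘s₀ = id, d₁∘s₀ = id, d₁∘s₁ = id, d₂∘s₁ = id. -/
/-- the degeneracies `s₀, s₁ : A₁ → A₂` are algebra homomorphisms and
satisfy the simplicial identities `d₀∘s₀ = id`, `d₁∘s₀ = id`, `d₁∘s₁ = id`, `d₂∘s₁ = id`. -/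
theorem stmt8 (k L E R : Type*) [CommRing k] [CommRing L] [CommRing E] [CommRing R]
    [Algebra k L] [Algebra k E] [Algebra k R] (T : TwoCrossedModule k L E R) :
    ∀ (m1 : R × E → R × E → R × E)
      (mul2 : (R × E) × (E × L) → (R × E) × (E × L) → (R × E) × (E × L))
      (d0 d1 d2 : (R × E) × (E × L) → R × E)
      (s0 s1 : R × E → (R × E) × (E × L)),
      (m1 = fun p q => (p.1 * q.1, T.actE.act p.1 q.2 + T.actE.act q.1 p.2 + p.2 * q.2)) →
      (mul2 = fun p q => (m1 p.1 q.1,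
        (p.1.2 * q.2.1 + T.actE.act p.1.1 q.2.1,
          T.actL.act (T.d1 p.1.2) q.2.2 + T.actL.act p.1.1 q.2.2 - T.lift q.2.1 p.1.2)
        + (q.1.2 * p.2.1 + T.actE.act q.1.1 p.2.1,
          T.actL.act (T.d1 q.1.2) p.2.2 + T.actL.act q.1.1 p.2.2 - T.lift p.2.1 q.1.2)
        + (p.2.1 * q.2.1,
          T.lift p.2.1 (T.d2 q.2.2) + T.lift q.2.1 (T.d2 p.2.2) + p.2.2 * q.2.2))) →
      (d0 = fun p => p.1) →
      (d1 = fun p => (p.1.1, p.1.2 + p.2.1)) →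
      (d2 = fun p => (p.1.1 + T.d1 p.1.2, p.2.1 + T.d2 p.2.2)) →
      (s0 = fun p => (p, (0, 0))) →
      (s1 = fun p => ((p.1, 0), (p.2, 0))) →
      ((∀ p q, s0 (p + q) = s0 p + s0 q) ∧ (∀ (c : k) p, s0 (c • p) = c • s0 p) ∧
        (∀ p q, s0 (m1 p q) = mul2 (s0 p) (s0 q))) ∧
      ((∀ p q, s1 (p + q) = s1 p + s1 q) ∧ (∀ (c : k) p, s1 (c • p) = c • s1 p) ∧
        (∀ p q, s1 (m1 p q) = mul2 (s1 p) (s1 q))) ∧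
      (∀ p, d0 (s0 p) = p) ∧ (∀ p, d1 (s0 p) = p) ∧
      (∀ p, d1 (s1 p) = p) ∧ (∀ p, d2 (s1 p) = p) := by
  intro m1 mul2 d0 d1 d2 s0 s1 hm1 hmul2 hd0 hd1 hd2 hs0 hs1
  subst hm1 hmul2 hd0 hd1 hd2 hs0 hs1
  refine ⟨⟨fun p q => ?_, fun c p => ?_, fun p q => ?_⟩,
    ⟨fun p q => ?_, fun c p => ?_, fun p q => ?_⟩,
    fun p => rfl, fun p => by simp, fun p => by simp, fun p => by simp⟩ <;>
  simp [Prod.ext_iff, Prod.smul_def, mul_comm]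
end

section
/- Let (L,E,R,∂₂,∂₁,{,}) be a 2-crossed module of commutative algebras, with E acting on L by e▶'l = {e⊗∂₂(l)}. Then the formula (e,l)▶*l' = e▶'l' + ll' defines an algebra action of the semidirect product E⋉L on L. -/
section Aux
variable {k L E R : Type*} [CommRing k] [CommRing L] [CommRing E] [CommRing R]
    [Algebra k L] [Algebra k E] [Algebra k R] (T : TwoCrossedModule k L E R)

lemma act_d2_zero (l : L) (x : L) : T.actL.act (T.d1 (T.d2 l)) x = 0 := by
  rw [T.comp]; simp

lemma d2_lift (e : E) (l : L) : T.d2 (T.lift e (T.d2 l)) = e * T.d2 l := by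
  rw [T.axm1, T.comp]; simp

lemma key (e : E) (l l' : L) :
    T.lift e (T.d2 l * T.d2 l') = T.lift e (T.d2 l) * l' := by
  rw [T.axm3, act_d2_zero, add_zero, ← d2_lift, T.axm2]

lemma key2 (e : E) (e' : E) (l : L) :
    T.lift e (e' * T.d2 l) = T.lift (e * e') (T.d2 l) := by
  rw [T.axm3, act_d2_zero, add_zero]

end Aux
/-- `(e,l) ▶* l' = e▶'l' + ll'` is an algebra action of `E ⋉ L` on `L`. -/
theorem stmt9 (k L E R : Type*) [CommRing k] [CommRing L] [CommRing E] [CommRing R]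
    [Algebra k L] [Algebra k E] [Algebra k R] (T : TwoCrossedModule k L E R) :
    ∀ (m2 : E × L → E × L → E × L) (star : E × L → L → L),
      (m2 = fun p q => (p.1 * q.1,
        T.lift p.1 (T.d2 q.2) + T.lift q.1 (T.d2 p.2) + p.2 * q.2)) →
      (star = fun p l' => T.lift p.1 (T.d2 l') + p.2 * l') →
      (∀ p p' l, star (p + p') l = star p l + star p' l) ∧
      (∀ p l l', star p (l + l') = star p l + star p l') ∧
      (∀ (c : k) p l, star (c • p) l = c • star p l) ∧
      (∀ (c : k) p l, star p (c • l) = c • star p l) ∧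
      (∀ p l l', star p (l * l') = star p l * l') ∧
      (∀ p p' l, star (m2 p p') l = star p (star p' l)) := by
  rintro m2 star rfl rfl
  refine ⟨?_, ?_, ?_, ?_, ?_, ?_⟩
  · intro p p' l; simp [add_mul]; ring
  · intro p l l'; simp [mul_add]; ring
  · intro c p l; simp [smul_add, smul_mul_assoc]
  · intro c p l; simp [smul_add, mul_smul_comm]
  · intro p l l'
    simp only [T.d2_mul, key, add_mul]
    ring
  · rintro ⟨e, l₁⟩ ⟨e', l₂⟩ l
    simp only []
    rw [map_add, d2_lift, T.d2_mul, map_add, key2, key]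
    have h1 : l₁ * (T.lift e' (T.d2 l) + l₂ * l) =
        l₁ * T.lift e' (T.d2 l) + l₁ * l₂ * l := by ring
    have h2 : l₁ * T.lift e' (T.d2 l) = T.lift e' (T.d2 l₁) * l := by
      rw [mul_comm l₁, ← key, ← key, mul_comm (T.d2 l) (T.d2 l₁)]
    rw [h1, h2]; ring
end

section
/- Let (L,E,R,∂₂,∂₁,{,}) be a 2-crossed module of commutative algebras. The formula e▶²_e(e',l,l') = (ee', e▶'l, ∂₁(e)▶l' − {(∂₂(l)+e')⊗e}) defines an algebra action of E on (E⋉_{▶'}L)⋉_{▶*}L. -/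
namespace TwoCrossedModule
variable {k L E R : Type*} [CommRing k] [CommRing L] [CommRing E] [CommRing R]
    [Algebra k L] [Algebra k E] [Algebra k R] (T : TwoCrossedModule k L E R)

lemma d2_lift (e : E) (l : L) : T.d2 (T.lift e (T.d2 l)) = e * T.d2 l := by
  simp [T.axm1, T.comp]

lemma lift_assoc (e x : E) (l : L) :
    T.lift e (x * T.d2 l) = T.lift (e * x) (T.d2 l) := by
  have h := T.axm3 e x (T.d2 l)
  simpa [T.comp] using h

lemma lift_mul_right (e : E) (l l' : L) :
    T.lift e (T.d2 l * T.d2 l') = T.lift e (T.d2 l) * l' := by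
  rw [T.lift_assoc, ← T.d2_lift, T.axm2]

lemma lift_lift_e (x : E) (l : L) (e : E) :
    T.lift (x * T.d2 l) e
      = T.lift (e * x) (T.d2 l) - T.actL.act (T.d1 e) (T.lift x (T.d2 l)) := by
  rw [← T.d2_lift, T.axm4, T.d2_lift, T.lift_assoc]

lemma lift_d2d2 (l l' : L) (e : E) :
    T.lift (T.d2 l * T.d2 l') e
      = T.lift e (T.d2 l) * l' - T.actL.act (T.d1 e) (l * l') := by
  rw [← T.d2_mul, T.axm4, T.d2_mul, T.lift_mul_right]

lemma mul_lift (l : L) (x e : E) :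
    l * T.lift x e = T.lift (T.d2 l * x) e := by
  rw [← T.axm2, T.axm1, map_sub, T.axm3, ← T.axm6b]; ring

lemma lift_d2mul (x : E) (l : L) (e : E) :
    T.lift x (T.d2 l * e) = T.lift (e * x) (T.d2 l) := by
  rw [T.axm3 x (T.d2 l) e, T.lift_lift_e]; ring

end TwoCrossedModule

/-- `e ▶² (e',l,l') = (ee', e▶'l, ∂₁(e)▶l' - {(∂₂(l)+e')⊗e})` is an
algebra action of `E` on `(E ⋉ L) ⋉ L`. -/
theorem stmt11 (k L E R : Type*) [CommRing k] [CommRing L] [CommRing E] [CommRing R]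
    [Algebra k L] [Algebra k E] [Algebra k R] (T : TwoCrossedModule k L E R) :
    ∀ (mul3 : E × L × L → E × L × L → E × L × L) (eact : E → E × L × L → E × L × L),
      (mul3 = fun p q => (p.1 * q.1,
        T.lift p.1 (T.d2 q.2.1) + T.lift q.1 (T.d2 p.2.1) + p.2.1 * q.2.1,
        (T.lift p.1 (T.d2 q.2.2) + p.2.1 * q.2.2)
          + (T.lift q.1 (T.d2 p.2.2) + q.2.1 * p.2.2) + p.2.2 * q.2.2)) →
      (eact = fun e p => (e * p.1, T.lift e (T.d2 p.2.1),
        T.actL.act (T.d1 e) p.2.2 - T.lift (T.d2 p.2.1 + p.1) e)) →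
      (∀ e e' p, eact (e + e') p = eact e p + eact e' p) ∧
      (∀ e p q, eact e (p + q) = eact e p + eact e q) ∧
      (∀ (c : k) e p, eact (c • e) p = c • eact e p) ∧
      (∀ (c : k) e p, eact e (c • p) = c • eact e p) ∧
      (∀ e p q, eact e (mul3 p q) = mul3 (eact e p) q) ∧
      (∀ e e' p, eact (e * e') p = eact e (eact e' p)) := by
  rintro mul3 eact rfl rfl
  refine ⟨?_, ?_, ?_, ?_, ?_, ?_⟩
  · intro e e' ⟨p1, p2, p3⟩
    simp only [Prod.mk_add_mk, Prod.mk.injEq, map_add, LinearMap.add_apply]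
    refine ⟨by ring, trivial, by ring⟩
  · intro e ⟨p1, p2, p3⟩ ⟨q1, q2, q3⟩
    simp only [Prod.mk_add_mk, Prod.mk.injEq, map_add, LinearMap.add_apply]
    refine ⟨by ring, trivial, by ring⟩
  · intro c e ⟨p1, p2, p3⟩
    simp only [Prod.smul_mk, Prod.mk.injEq, map_smul, LinearMap.smul_apply, smul_sub,
      smul_mul_assoc]
  · intro c e ⟨p1, p2, p3⟩
    simp only [Prod.smul_mk, Prod.mk.injEq, map_smul, LinearMap.smul_apply, smul_sub,
      smul_add, map_add, LinearMap.add_apply, mul_smul_comm]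
  · intro e ⟨p1, p2, p3⟩ ⟨q1, q2, q3⟩
    simp only [Prod.mk.injEq]
    refine ⟨by ring, ?_, ?_⟩
    · simp only [map_add, LinearMap.add_apply, T.d2_mul, T.d2_lift, T.lift_mul_right]
      rw [T.lift_assoc e p1 q2, T.lift_assoc e q1 p2, T.lift_assoc q1 e p2, mul_comm e q1]
    · simp only [map_add, map_sub, LinearMap.add_apply, LinearMap.sub_apply, T.d2_mul,
        T.d2_lift, T.d2_act, T.axm1, T.comp, map_zero, LinearMap.zero_apply, sub_zero,
        mul_add, add_mul, mul_sub, sub_mul]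
      have h1 : q2 * T.lift p1 e = T.lift (p1 * T.d2 q2) e := by
        rw [T.mul_lift, mul_comm (T.d2 q2) p1]
      have h2 : q2 * T.lift (T.d2 p2) e = T.lift (T.d2 p2 * T.d2 q2) e := by
        rw [T.mul_lift, mul_comm (T.d2 q2) (T.d2 p2)]
      have h8 : T.lift (q1 * p1) e = T.lift (p1 * q1) e := by rw [mul_comm q1 p1]
      have h14 : q3 * T.lift p1 e = T.lift (p1 * T.d2 q3) e := by
        rw [T.mul_lift, mul_comm (T.d2 q3) p1]
      linear_combination h1 + h2 - T.lift_lift_e q1 p2 e + T.lift_d2mul q1 p2 e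
        - (T.axm6b (T.d1 e) q1 (T.d2 p2)).symm + T.axm3 q1 p1 e
        - (T.axm6b (T.d1 e) q1 p1).symm + h8 - (T.axm6b (T.d1 e) q1 (T.d2 p3)).symm
        - (T.actL.a1' (T.d1 e) q2 p3).symm - (T.actL.a1 (T.d1 e) p3 q3).symm
        + q3 * T.axm4 p2 e + T.actL.a1 (T.d1 e) p2 q3 + h14 + T.lift_lift_e p1 q3 e
  · intro e e' ⟨p1, p2, p3⟩
    simp only [Prod.mk.injEq]
    refine ⟨by ring, ?_, ?_⟩
    · rw [T.d2_lift, T.lift_assoc]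
    · simp only [T.d1_mul, T.actL.a2, T.d2_lift, map_add, map_sub, LinearMap.add_apply,
        LinearMap.sub_apply]
      rw [mul_comm e e', mul_comm e' (T.d2 p2), mul_comm e' p1,
        T.axm3 (T.d2 p2) e' e, T.axm3 p1 e' e]
      ring
end

section
/- Let (E,R,∂) and (E',R',∂') be crossed modules of commutative algebras, f=(f₁,f₀) a crossed module morphism, and s: R → E' an f₀-derivation, i.e., a k-linear map with s(rr') = f₀(r)▶s(r') + f₀(r')▶s(r) + s(r)s(r'). Define g₀(r) = f₀(r) + ∂'(s(r)) and g₁(e) = f₁(e) + s(∂(e)). Then g=(g₁,g₀) is a crossed module morphism (E,R,∂) → (E',R',∂'): g₀ and g₁ are algebra maps, g₀∘∂ = ∂'∘g₁, and g₁(r▶e) = g₀(r)▶g₁(e). -/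
/-- A pre-crossed module of commutative `k`-algebras. -/
structure PreCrossedModule (k E R : Type*) [CommRing k] [CommRing E] [CommRing R]
    [Algebra k E] [Algebra k R] extends AlgAction k R E where
  map : E →ₗ[k] R
  map_mul : ∀ e e' : E, map (e * e') = map e * map e'
  xm1 : ∀ (r : R) (e : E), map (act r e) = r * map e

/-- A crossed module of commutative `k`-algebras. -/
structure CrossedModule (k E R : Type*) [CommRing k] [CommRing E] [CommRing R]
    [Algebra k E] [Algebra k R] extends PreCrossedModule k E R where
  xm2 : ∀ e e' : E, act (map e) e' = e * e'

/-- A morphism of crossed modules of commutative `k`-algebras. -/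
structure XHom {k E R E' R' : Type*} [CommRing k] [CommRing E] [CommRing R]
    [CommRing E'] [CommRing R'] [Algebra k E] [Algebra k R] [Algebra k E'] [Algebra k R']
    (C : CrossedModule k E R) (C' : CrossedModule k E' R') where
  f0 : R →ₗ[k] R'
  f1 : E →ₗ[k] E'
  f0_mul : ∀ r r', f0 (r * r') = f0 r * f0 r'
  f1_mul : ∀ e e', f1 (e * e') = f1 e * f1 e'
  comm : ∀ e, f0 (C.map e) = C'.map (f1 e)
  hact : ∀ r e, f1 (C.act r e) = C'.act (f0 r) (f1 e)

/-- `s : R → E'` is an `f₀`-derivation. -/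
def IsDeriv {k E R E' R' : Type*} [CommRing k] [CommRing E] [CommRing R]
    [CommRing E'] [CommRing R'] [Algebra k E] [Algebra k R] [Algebra k E'] [Algebra k R']
    {C : CrossedModule k E R} {C' : CrossedModule k E' R'}
    (f : XHom C C') (s : R →ₗ[k] E') : Prop :=
  ∀ r r', s (r * r') = C'.act (f.f0 r) (s r') + C'.act (f.f0 r') (s r) + s r * s r'

/-- `s` connects `f` to `g`: `g₀ = f₀ + ∂'∘s` and `g₁ = f₁ + s∘∂`. -/
def Connects {k E R E' R' : Type*} [CommRing k] [CommRing E] [CommRing R]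
    [CommRing E'] [CommRing R'] [Algebra k E] [Algebra k R] [Algebra k E'] [Algebra k R']
    {C : CrossedModule k E R} {C' : CrossedModule k E' R'}
    (f g : XHom C C') (s : R →ₗ[k] E') : Prop :=
  (∀ r, g.f0 r = f.f0 r + C'.map (s r)) ∧ (∀ e, g.f1 e = f.f1 e + s (C.map e))

/-- if `f` is a crossed module morphism and `s` an `f₀`-derivation,
then `g₀ = f₀ + ∂'∘s`, `g₁ = f₁ + s∘∂` is again a crossed module morphism. -/
theorem stmt12 (k E R E2 R2 : Type*) [CommRing k] [CommRing E] [CommRing R] [CommRing E2] [CommRing R2]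
    [Algebra k E] [Algebra k R] [Algebra k E2] [Algebra k R2]
    (C : CrossedModule k E R) (C2 : CrossedModule k E2 R2)
    (f : XHom C C2) (s : R →ₗ[k] E2) (hs : IsDeriv f s) :
    ∃ g : XHom C C2, Connects f g s := by
  refine ⟨⟨f.f0 + C2.map ∘ₗ s, f.f1 + s ∘ₗ C.map, ?_, ?_, ?_, ?_⟩, fun r => rfl, fun e => rfl⟩
  · intro r r'
    simp only [LinearMap.add_apply, LinearMap.comp_apply, f.f0_mul, hs r r',
      map_add, C2.map_mul, C2.xm1]
    ring
  · intro e e'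
    simp only [LinearMap.add_apply, LinearMap.comp_apply, f.f1_mul, C.map_mul,
      hs (C.map e) (C.map e'), f.comm, C2.xm2]
    ring
  · intro e
    simp only [LinearMap.add_apply, LinearMap.comp_apply, f.comm, map_add]
  · intro r e
    simp only [LinearMap.add_apply, LinearMap.comp_apply, f.hact, C.xm1,
      hs r (C.map e), map_add, f.comm, C2.xm2]
    ring
end

section
/- Let f,g be crossed module morphisms (E,R,∂) → (E',R',∂') of commutative algebras and s an f₀-derivation connecting f to g (so g₀ = f₀ + ∂'∘s and g₁ = f₁ + s∘∂). Then s̄ = −s is a g₀-derivation connecting g to f: s̄(rr') = g₀(r)▶s̄(r') + g₀(r')▶s̄(r) + s̄(r)s̄(r'). -/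
/-- if `s` is an `f₀`-derivation connecting `f` to `g`, then
`-s` is a `g₀`-derivation connecting `g` to `f`. -/
theorem stmt13 (k E R E2 R2 : Type*) [CommRing k] [CommRing E] [CommRing R] [CommRing E2] [CommRing R2]
    [Algebra k E] [Algebra k R] [Algebra k E2] [Algebra k R2]
    (C : CrossedModule k E R) (C2 : CrossedModule k E2 R2)
    (f g : XHom C C2) (s : R →ₗ[k] E2) (hs : IsDeriv f s) (hc : Connects f g s) :
    IsDeriv g (-s) ∧ Connects g f (-s) := by
  obtain ⟨hc0, hc1⟩ := hc
  refine ⟨?_, ?_, ?_⟩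
  · intro r r'
    simp only [LinearMap.neg_apply, map_neg, hs r r', hc0, map_add,
      LinearMap.add_apply, C2.xm2, neg_mul_neg]
    ring
  · intro r
    simp only [LinearMap.neg_apply, map_neg, hc0 r]; ring
  · intro e
    simp only [LinearMap.neg_apply, map_neg, hc1 e]; ring
end

section
/- Let f,g,h be crossed module morphisms (E,R,∂) → (E',R',∂') of commutative algebras, s an f₀-derivation connecting f to g, and s' a g₀-derivation connecting g to h. Then the pointwise sum s+s' is an f₀-derivation connecting f to h: (s+s')(rr') = f₀(r)▶(s+s')(r') + f₀(r')▶(s+s')(r) + (s+s')(r)(s+s')(r'). -/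
/-- the pointwise sum of a derivation connecting `f` to `g` and a
derivation connecting `g` to `h` is an `f₀`-derivation connecting `f` to `h`. -/
theorem stmt14 (k E R E2 R2 : Type*) [CommRing k] [CommRing E] [CommRing R] [CommRing E2] [CommRing R2]
    [Algebra k E] [Algebra k R] [Algebra k E2] [Algebra k R2]
    (C : CrossedModule k E R) (C2 : CrossedModule k E2 R2)
    (f g h : XHom C C2) (s s' : R →ₗ[k] E2)
    (hs : IsDeriv f s) (hc : Connects f g s)
    (hs' : IsDeriv g s') (hc' : Connects g h s') :
    IsDeriv f (s + s') ∧ Connects f h (s + s') := by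
  obtain ⟨hc0, hc1⟩ := hc
  obtain ⟨hc0', hc1'⟩ := hc'
  refine ⟨?_, ?_, ?_⟩
  · intro r r'
    simp only [LinearMap.add_apply, hs r r', hs' r r', hc0, map_add,
      LinearMap.add_apply, C2.xm2]
    ring
  · intro r
    simp only [hc0', hc0, LinearMap.add_apply, map_add]
    ring
  · intro e
    simp only [hc1', hc1, LinearMap.add_apply]
    ring
end

section
/- For arbitrary crossed modules of commutative algebras A and A', homotopy of crossed module morphisms A → A' is an equivalence relation; moreover there is a groupoid whose objects are crossed module morphisms A → A' and whose morphisms f → g are f₀-derivations s with g₀ = f₀ + ∂'∘s and g₁ = f₁ + s∘∂, with identity the zero derivation, composition given by pointwise addition, and inverse given by negation. -/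
/-- homotopy of crossed module morphisms is an equivalence relation,
and there is a groupoid whose morphisms `f → g` are the derivations connecting `f`
to `g`, with identity `0`, composition pointwise addition, inverse negation. -/
theorem stmt15 (k E R E2 R2 : Type*) [CommRing k] [CommRing E] [CommRing R] [CommRing E2] [CommRing R2]
    [Algebra k E] [Algebra k R] [Algebra k E2] [Algebra k R2]
    (C : CrossedModule k E R) (C2 : CrossedModule k E2 R2) :
    Equivalence (fun f g : XHom C C2 => ∃ s : R →ₗ[k] E2, IsDeriv f s ∧ Connects f g s) ∧
    (∀ f : XHom C C2, IsDeriv f 0 ∧ Connects f f 0) ∧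
    (∀ (f g : XHom C C2) (s : R →ₗ[k] E2),
      IsDeriv f s → Connects f g s → IsDeriv g (-s) ∧ Connects g f (-s)) ∧
    (∀ (f g h : XHom C C2) (s s' : R →ₗ[k] E2),
      IsDeriv f s → Connects f g s → IsDeriv g s' → Connects g h s' →
        IsDeriv f (s + s') ∧ Connects f h (s + s')) := by
  have hz : ∀ f : XHom C C2, IsDeriv f 0 ∧ Connects f f 0 := by
    intro f
    refine ⟨?_, ?_, ?_⟩ <;> intro x <;> simp [IsDeriv]
  have hneg : ∀ (f g : XHom C C2) (s : R →ₗ[k] E2),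
      IsDeriv f s → Connects f g s → IsDeriv g (-s) ∧ Connects g f (-s) := by
    intro f g s hd hc
    refine ⟨?_, ?_, ?_⟩
    · intro r r'
      simp only [LinearMap.neg_apply, hd r r', hc.1, map_add, LinearMap.add_apply,
        map_neg, C2.xm2]
      ring
    · intro r
      simp only [LinearMap.neg_apply, hc.1, map_neg]
      ring
    · intro e
      simp only [LinearMap.neg_apply, hc.2, map_neg]
      ring
  have hadd : ∀ (f g h : XHom C C2) (s s' : R →ₗ[k] E2),
      IsDeriv f s → Connects f g s → IsDeriv g s' → Connects g h s' →
        IsDeriv f (s + s') ∧ Connects f h (s + s') := by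
    intro f g h s s' hd hc hd' hc'
    refine ⟨?_, ?_, ?_⟩
    · intro r r'
      simp only [LinearMap.add_apply, hd r r', hd' r r', hc.1, map_add, C2.xm2]
      ring
    · intro r
      simp only [LinearMap.add_apply, hc'.1 r, hc.1 r, map_add]
      ring
    · intro e
      simp only [LinearMap.add_apply, hc'.2 e, hc.2 e]
      ring
  refine ⟨⟨fun f => ⟨0, hz f⟩, ?_, ?_⟩, hz, hneg, hadd⟩
  · rintro f g ⟨s, hd, hc⟩
    exact ⟨-s, hneg f g s hd hc⟩
  · rintro f g h ⟨s, hd, hc⟩ ⟨s', hd', hc'⟩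
    exact ⟨s + s', hadd f g h s s' hd hc hd' hc'⟩
end
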